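/- Let α, τ_α be real, m a positive integer, l an integer, and ω₀ > 0 a real number with 1 − α·cos(ω₀τ_α) > 0 and cos θ⁺(ω₀,l) ≠ 0. Put τ_β = τ_β⁺(ω₀,l), and define A = ω₀·(ω₀ + α·sin(ω₀τ_α)), B = ω₀·(α·cos(ω₀τ_α) − 1), C = 1 + ατ_α·cos(ω₀τ_α) + (αω₀τ_βτ_α/m)·sin(ω₀τ_α) + τ_β·(1 − α·cos(ω₀τ_α)), and E = −ατ_α·sin(ω₀τ_α) + (ω₀τ_β/m)·(1 + ατ_α·cos(ω₀τ_α)) + τ_β·(ω₀ + α·sin(ω₀τ_α)). Then the function ω ↦ β⁺(ω,l) is differentiable at ω₀ with derivative equal to ω₀·β⁺(ω₀,l)·(A·C + B·E)/(A² + B²). -/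

import Mathlib

open Real

noncomputable def hfun (α τα ω : ℝ) : ℝ :=
  -(ω + α * Real.sin (ω * τα)) / (1 - α * Real.cos (ω * τα))

noncomputable def thetaPlus (α τα : ℝ) (m : ℕ) (l : ℤ) (ω : ℝ) : ℝ :=
  (Real.arctan (hfun α τα ω) + 2 * l * π) / m

noncomputable def Nfun (α τα ω : ℝ) : ℝ :=
  Real.sqrt ((1 - α * Real.cos (ω * τα)) ^ 2 + (ω + α * Real.sin (ω * τα)) ^ 2)

noncomputable def betaPlus (α τα : ℝ) (m : ℕ) (l : ℤ) (ω : ℝ) : ℝ :=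
  Nfun α τα ω * (Real.cos (thetaPlus α τα m l ω)) ^ (-(m : ℤ))

noncomputable def tauBetaPlus (α τα : ℝ) (m : ℕ) (l : ℤ) (ω : ℝ) : ℝ :=
  ((m : ℝ) / ω) * Real.tan (thetaPlus α τα m l ω)

set_option maxHeartbeats 2000000 in
theorem hasDerivAt_betaPlus
    (α τα : ℝ) (m : ℕ) (hm : 0 < m) (l : ℤ) (ω₀ : ℝ) (hω₀ : 0 < ω₀)
    (hden : 1 - α * Real.cos (ω₀ * τα) > 0)
    (hcos : Real.cos (thetaPlus α τα m l ω₀) ≠ 0)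
    (τβ A B C E : ℝ)
    (hτβ : τβ = tauBetaPlus α τα m l ω₀)
    (hA : A = ω₀ * (ω₀ + α * Real.sin (ω₀ * τα)))
    (hB : B = ω₀ * (α * Real.cos (ω₀ * τα) - 1))
    (hC : C = 1 + α * τα * Real.cos (ω₀ * τα)
        + (α * ω₀ * τβ * τα / m) * Real.sin (ω₀ * τα)
        + τβ * (1 - α * Real.cos (ω₀ * τα)))
    (hE : E = -(α * τα) * Real.sin (ω₀ * τα)
        + (ω₀ * τβ / m) * (1 + α * τα * Real.cos (ω₀ * τα))
        + τβ * (ω₀ + α * Real.sin (ω₀ * τα))) :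
    HasDerivAt (fun ω => betaPlus α τα m l ω)
      (ω₀ * betaPlus α τα m l ω₀ * (A * C + B * E) / (A ^ 2 + B ^ 2)) ω₀ := by
  have hm' : (m : ℝ) ≠ 0 := Nat.cast_ne_zero.mpr hm.ne'
  have hω' : ω₀ ≠ 0 := hω₀.ne'
  have hP0 : (1 - α * Real.cos (ω₀ * τα)) ≠ 0 := ne_of_gt hden
  have hlin : HasDerivAt (fun ω : ℝ => ω * τα) τα ω₀ := by
    simpa using (hasDerivAt_id ω₀).mul_const τα
  have hsin : HasDerivAt (fun ω => Real.sin (ω * τα)) (Real.cos (ω₀ * τα) * τα) ω₀ :=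
    by have := (Real.hasDerivAt_sin (ω₀ * τα)).comp ω₀ hlin; exact this
  have hcosf : HasDerivAt (fun ω => Real.cos (ω * τα)) (-Real.sin (ω₀ * τα) * τα) ω₀ :=
    by have := (Real.hasDerivAt_cos (ω₀ * τα)).comp ω₀ hlin; exact this
  have hP : HasDerivAt (fun ω => 1 - α * Real.cos (ω * τα)) (α * τα * Real.sin (ω₀ * τα)) ω₀ := by
    have := (hcosf.const_mul α).const_sub 1
    exact this.congr_deriv (by ring)
  have hQ : HasDerivAt (fun ω => ω + α * Real.sin (ω * τα)) (1 + α * τα * Real.cos (ω₀ * τα)) ω₀ := by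
    have := (hasDerivAt_id ω₀).add (hsin.const_mul α)
    exact this.congr_deriv (by ring)
  have hh : HasDerivAt (fun ω => hfun α τα ω)
      ((-(1 + α * τα * Real.cos (ω₀ * τα)) * (1 - α * Real.cos (ω₀ * τα)) -
        (-(ω₀ + α * Real.sin (ω₀ * τα))) * (α * τα * Real.sin (ω₀ * τα)))
        / (1 - α * Real.cos (ω₀ * τα)) ^ 2) ω₀ := by
    exact hQ.neg.div hP hP0
  have hθ : HasDerivAt (fun ω => thetaPlus α τα m l ω)
      ((1 / (1 + (hfun α τα ω₀) ^ 2) *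
        ((-(1 + α * τα * Real.cos (ω₀ * τα)) * (1 - α * Real.cos (ω₀ * τα)) -
        (-(ω₀ + α * Real.sin (ω₀ * τα))) * (α * τα * Real.sin (ω₀ * τα)))
        / (1 - α * Real.cos (ω₀ * τα)) ^ 2)) / m) ω₀ :=
    (hh.arctan.add_const (2 * l * π)).div_const m
  have hpossum : (0:ℝ) < (1 - α * Real.cos (ω₀ * τα)) ^ 2 + (ω₀ + α * Real.sin (ω₀ * τα)) ^ 2 := by
    positivity
  have hsq : HasDerivAt
      (fun ω => (1 - α * Real.cos (ω * τα)) ^ 2 + (ω + α * Real.sin (ω * τα)) ^ 2)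
      (2 * (1 - α * Real.cos (ω₀ * τα)) ^ 1 * (α * τα * Real.sin (ω₀ * τα)) +
       2 * (ω₀ + α * Real.sin (ω₀ * τα)) ^ 1 * (1 + α * τα * Real.cos (ω₀ * τα))) ω₀ :=
    (hP.pow 2).add (hQ.pow 2)
  have hN : HasDerivAt (fun ω => Nfun α τα ω)
      ((2 * (1 - α * Real.cos (ω₀ * τα)) ^ 1 * (α * τα * Real.sin (ω₀ * τα)) +
       2 * (ω₀ + α * Real.sin (ω₀ * τα)) ^ 1 * (1 + α * τα * Real.cos (ω₀ * τα))) /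
       (2 * Real.sqrt ((1 - α * Real.cos (ω₀ * τα)) ^ 2 + (ω₀ + α * Real.sin (ω₀ * τα)) ^ 2))) ω₀ :=
    hsq.sqrt hpossum.ne'
  have hzp : HasDerivAt (fun ω => (Real.cos (thetaPlus α τα m l ω)) ^ (-(m:ℤ)))
      (((↑(-(m:ℤ)) : ℝ) * (Real.cos (thetaPlus α τα m l ω₀)) ^ (-(m:ℤ) - 1)) *
        (-Real.sin (thetaPlus α τα m l ω₀) *
          ((1 / (1 + (hfun α τα ω₀) ^ 2) *
        ((-(1 + α * τα * Real.cos (ω₀ * τα)) * (1 - α * Real.cos (ω₀ * τα)) -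
        (-(ω₀ + α * Real.sin (ω₀ * τα))) * (α * τα * Real.sin (ω₀ * τα)))
        / (1 - α * Real.cos (ω₀ * τα)) ^ 2)) / m))) ω₀ :=
    by simpa [Function.comp_def] using (hasDerivAt_zpow (-(m:ℤ)) _ (Or.inl hcos)).comp ω₀ hθ.cos
  have hβ := hN.mul hzp
  have hs : Real.sin (thetaPlus α τα m l ω₀)
      = ω₀ * τβ * Real.cos (thetaPlus α τα m l ω₀) / m := by
    rw [hτβ, tauBetaPlus, Real.tan_eq_sin_div_cos]
    field_simp
  have hN0sq : Real.sqrt ((1 - α * Real.cos (ω₀ * τα)) ^ 2 + (ω₀ + α * Real.sin (ω₀ * τα)) ^ 2) ^ 2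
      = (1 - α * Real.cos (ω₀ * τα)) ^ 2 + (ω₀ + α * Real.sin (ω₀ * τα)) ^ 2 :=
    Real.sq_sqrt hpossum.le
  have hN0pos : 0 < Real.sqrt ((1 - α * Real.cos (ω₀ * τα)) ^ 2 + (ω₀ + α * Real.sin (ω₀ * τα)) ^ 2) :=
    Real.sqrt_pos.mpr hpossum
  have e1 : Real.cos (thetaPlus α τα m l ω₀) ^ (-(m:ℤ))
      = (Real.cos (thetaPlus α τα m l ω₀) ^ m)⁻¹ := by
    rw [zpow_neg, zpow_natCast]
  have e2 : Real.cos (thetaPlus α τα m l ω₀) ^ (-(m:ℤ) - 1)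
      = (Real.cos (thetaPlus α τα m l ω₀) ^ (m + 1))⁻¹ := by
    rw [show (-(m:ℤ) - 1) = -((m:ℤ) + 1) by ring, zpow_neg, show ((m:ℤ)+1) = ((m+1 : ℕ) : ℤ) by push_cast; ring, zpow_natCast]
  unfold betaPlus Nfun
  convert hβ using 1
  rfl
  rfl
  rfl
  subst hA hB hC hE
  rw [e1, e2, hs]
  simp only [hfun, Nfun]
  set N₀ := Real.sqrt ((1 - α * Real.cos (ω₀ * τα)) ^ 2 + (ω₀ + α * Real.sin (ω₀ * τα)) ^ 2) with hN₀
  clear_value N₀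
  set cθ := Real.cos (thetaPlus α τα m l ω₀) with hcθ
  clear_value cθ
  set s := Real.sin (ω₀ * τα)
  set c := Real.cos (ω₀ * τα)
  have hAB : (ω₀ * (ω₀ + α * s)) ^ 2 + (ω₀ * (α * c - 1)) ^ 2 = ω₀ ^ 2 * N₀ ^ 2 := by
    rw [hN0sq]; ring
  rw [hAB]
  have h4 : N₀ ^ 4 = ((1 - α * c) ^ 2 + (ω₀ + α * s) ^ 2) ^ 2 := by
    rw [show N₀ ^ 4 = (N₀ ^ 2) ^ 2 by ring, hN0sq]
  push_cast
  field_simp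
  ring_nf
  simp only [h4, hN0sq]
  ring
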